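/- As n → ∞, the sum ∑ 1/((r+ℓ)(ℓ+s)), taken over all integers k₁ ≥ 1, r ≥ 0, ℓ ≥ 1, s ≥ 0 with k₁ + r + ℓ + s ≤ n, is asymptotically equivalent to (π²/12)·n². -/

import Mathlib

open Filter Finset Real

noncomputable def Uk (k : ℕ) : ℝ :=
  ∑ p ∈ (Finset.Icc 1 k ×ˢ Finset.Icc 1 k).filter (fun p : ℕ × ℕ => k < p.1 + p.2),
    1 / ((p.1 : ℝ) * p.2)

noncomputable def H2 (n : ℕ) : ℝ := ∑ m ∈ Finset.Icc 1 n, 1 / (m : ℝ) ^ 2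

noncomputable def Hs (n : ℕ) : ℝ := ∑ m ∈ Finset.Icc 1 n, 1 / (m : ℝ)

lemma Icc_succ_insert (k : ℕ) : Finset.Icc 1 (k+1) = insert (k+1) (Finset.Icc 1 k) := by
  ext x; simp [Finset.mem_Icc]; omega

lemma Uk_ite (k : ℕ) :
    Uk k = ∑ j ∈ Finset.Icc 1 k, ∑ q ∈ Finset.Icc 1 k,
      (if k < j + q then 1 / ((j : ℝ) * q) else 0) := by
  rw [Uk, Finset.sum_filter, Finset.sum_product]

lemma refl_sum (k : ℕ) :
    ∑ j ∈ Finset.Icc 1 k, 1 / ((k + 1 - j : ℕ) : ℝ) = Hs k := by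
  rw [Hs]
  refine Finset.sum_nbij' (fun j => k + 1 - j) (fun j => k + 1 - j) ?_ ?_ ?_ ?_ ?_ <;>
    intro a ha <;> simp only [Finset.mem_Icc] at ha ⊢ <;> first | omega | rfl

lemma diag_sum (k : ℕ) :
    ∑ j ∈ Finset.Icc 1 k, ∑ q ∈ Finset.Icc 1 k,
      (if j + q = k + 1 then 1 / ((j : ℝ) * q) else 0)
      = 2 * Hs k / (k + 1) := by
  have h1 : ∀ j ∈ Finset.Icc 1 k, ∑ q ∈ Finset.Icc 1 k,
      (if j + q = k + 1 then 1 / ((j : ℝ) * q) else 0) = 1 / ((j:ℝ) * ((k+1-j : ℕ):ℝ)) := by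
    intro j hj
    simp only [Finset.mem_Icc] at hj
    rw [Finset.sum_eq_single_of_mem (k + 1 - j)]
    · rw [if_pos (by omega)]
    · simp [Finset.mem_Icc]; omega
    · intro b hb hne
      exact if_neg (by simp [Finset.mem_Icc] at hb; omega)
  rw [Finset.sum_congr rfl h1]
  have h2 : ∀ j ∈ Finset.Icc 1 k, 1 / ((j:ℝ) * ((k+1-j : ℕ):ℝ))
      = (1 / (j:ℝ) + 1 / ((k+1-j : ℕ):ℝ)) / (k+1) := by
    intro j hj
    simp only [Finset.mem_Icc] at hj
    have hj0 : (0:ℝ) < (j:ℝ) := by exact_mod_cast hj.1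
    have hc : ((k+1-j : ℕ):ℝ) = (k:ℝ) + 1 - j := by
      push_cast [Nat.cast_sub (by omega : j ≤ k + 1)]; ring
    rw [hc]
    have h2 : (0:ℝ) < (k:ℝ) + 1 - j := by
      have : (j:ℝ) ≤ k := by exact_mod_cast hj.2
      linarith
    field_simp
    ring
  rw [Finset.sum_congr rfl h2, ← Finset.sum_div, Finset.sum_add_distrib, refl_sum]
  rw [Hs]; ring

lemma Uk_succ (k : ℕ) : Uk (k+1) = Uk k + 1 / ((k:ℝ)+1) ^ 2 := by
  rw [Uk_ite, Uk_ite, Icc_succ_insert]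
  rw [Finset.sum_insert (by simp)]
  have hrow : ∑ q ∈ insert (k+1) (Finset.Icc 1 k),
      (if k + 1 < (k+1) + q then 1 / (((k+1 : ℕ) : ℝ) * q) else 0)
      = 1 / (((k+1:ℕ)) : ℝ)^2 + Hs k / ((k:ℝ)+1) := by
    rw [Finset.sum_insert (by simp)]
    rw [if_pos (by omega)]
    have : ∀ q ∈ Finset.Icc 1 k,
        (if k + 1 < (k+1) + q then 1 / (((k+1 : ℕ):ℝ) * q) else 0)
        = (1/(q:ℝ)) / ((k:ℝ)+1) := by
      intro q hq
      simp only [Finset.mem_Icc] at hq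
      rw [if_pos (by omega)]
      push_cast
      have : (0:ℝ) < q := by exact_mod_cast hq.1
      field_simp
    rw [Finset.sum_congr rfl this, ← Finset.sum_div, ← Hs]
    push_cast
    ring_nf
  rw [hrow]
  have hcol : ∀ j ∈ Finset.Icc 1 k,
      (∑ q ∈ insert (k+1) (Finset.Icc 1 k),
        (if k + 1 < j + q then 1 / ((j : ℝ) * q) else 0))
      = (1/(j:ℝ)) / ((k:ℝ)+1) + ∑ q ∈ Finset.Icc 1 k,
          (if k + 1 < j + q then 1 / ((j : ℝ) * q) else 0) := by
    intro j hj
    simp only [Finset.mem_Icc] at hj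
    rw [Finset.sum_insert (by simp)]
    rw [if_pos (by omega)]
    congr 1
    push_cast
    have : (0:ℝ) < j := by exact_mod_cast hj.1
    field_simp
  rw [Finset.sum_congr rfl hcol, Finset.sum_add_distrib, ← Finset.sum_div, ← Hs]
  have hsplit : ∀ j ∈ Finset.Icc 1 k, ∀ q ∈ Finset.Icc 1 k,
      (if k < j + q then 1 / ((j : ℝ) * q) else 0)
      = (if k + 1 < j + q then 1 / ((j : ℝ) * q) else 0)
        + (if j + q = k + 1 then 1 / ((j : ℝ) * q) else 0) := by
    intro j _ q _
    by_cases h1 : k + 1 < j + q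
    · rw [if_pos h1, if_pos (by omega), if_neg (by omega)]; ring
    · by_cases h2 : j + q = k + 1
      · rw [if_pos (by omega), if_neg h1, if_pos h2]; ring
      · rw [if_neg (by omega), if_neg h1, if_neg h2]; ring
  have : ∑ j ∈ Finset.Icc 1 k, ∑ q ∈ Finset.Icc 1 k,
      (if k < j + q then 1 / ((j : ℝ) * q) else 0)
      = (∑ j ∈ Finset.Icc 1 k, ∑ q ∈ Finset.Icc 1 k,
          (if k + 1 < j + q then 1 / ((j : ℝ) * q) else 0)) + 2 * Hs k / (k+1) := by
    rw [← diag_sum k, ← Finset.sum_add_distrib]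
    refine Finset.sum_congr rfl fun j hj => ?_
    rw [← Finset.sum_add_distrib]
    exact Finset.sum_congr rfl fun q hq => hsplit j hj q hq
  rw [this]
  push_cast
  ring

lemma Uk_eq_H2 (k : ℕ) : Uk k = H2 k := by
  induction k with
  | zero => simp [Uk, H2]
  | succ k ih =>
    rw [Uk_succ, ih, H2, H2, Icc_succ_insert, Finset.sum_insert (by simp)]
    push_cast
    ring

lemma S_eq (n : ℕ) :
    (∑ p ∈ (Finset.Icc 1 n ×ˢ Finset.range (n + 1) ×ˢ
        Finset.Icc 1 n ×ˢ Finset.range (n + 1)).filter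
        (fun p : ℕ × ℕ × ℕ × ℕ => p.1 + p.2.1 + p.2.2.1 + p.2.2.2 ≤ n),
      1 / (((p.2.1 : ℝ) + p.2.2.1) * ((p.2.2.1 : ℝ) + p.2.2.2)))
    = ∑ k ∈ Finset.range n, ((n - k : ℕ) : ℝ) * Uk k := by
  rw [← Finset.sum_fiberwise_of_maps_to
    (g := fun p : ℕ × ℕ × ℕ × ℕ => p.2.1 + p.2.2.1 + p.2.2.2) (t := Finset.range n) ?hmap]
  case hmap =>
    intro p hp
    simp only [Finset.mem_filter, Finset.mem_product, Finset.mem_Icc, Finset.mem_range] at hp ⊢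
    omega
  refine Finset.sum_congr rfl fun k hk => ?_
  simp only [Finset.mem_range] at hk
  have key : (∑ p ∈ ((Finset.Icc 1 n ×ˢ Finset.range (n + 1) ×ˢ
        Finset.Icc 1 n ×ˢ Finset.range (n + 1)).filter
        (fun p : ℕ × ℕ × ℕ × ℕ => p.1 + p.2.1 + p.2.2.1 + p.2.2.2 ≤ n)).filter
        (fun p => p.2.1 + p.2.2.1 + p.2.2.2 = k),
      1 / (((p.2.1 : ℝ) + p.2.2.1) * ((p.2.2.1 : ℝ) + p.2.2.2)))
      = ∑ p ∈ (Finset.Icc 1 (n - k)) ×ˢ ((Finset.Icc 1 k ×ˢ Finset.Icc 1 k).filter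
          (fun p : ℕ × ℕ => k < p.1 + p.2)),
        1 / ((p.2.1 : ℝ) * p.2.2) := by
    refine Finset.sum_nbij'
      (fun p => (p.1, (p.2.1 + p.2.2.1, p.2.2.1 + p.2.2.2)))
      (fun p => (p.1, (k - p.2.2, p.2.1 + p.2.2 - k, k - p.2.1))) ?_ ?_ ?_ ?_ ?_
    · intro p hp
      simp only [Finset.mem_filter, Finset.mem_product, Finset.mem_Icc,
        Finset.mem_range] at hp ⊢
      omega
    · intro p hp
      simp only [Finset.mem_filter, Finset.mem_product, Finset.mem_Icc,
        Finset.mem_range] at hp ⊢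
      omega
    · intro p hp
      obtain ⟨t, r, l, s⟩ := p
      simp only [Finset.mem_filter, Finset.mem_product, Finset.mem_Icc,
        Finset.mem_range] at hp
      dsimp only
      simp only [Prod.mk.injEq, true_and, and_true]
      omega
    · intro p hp
      obtain ⟨t, a, b⟩ := p
      simp only [Finset.mem_filter, Finset.mem_product, Finset.mem_Icc,
        Finset.mem_range] at hp
      dsimp only
      simp only [Prod.mk.injEq, true_and, and_true]
      omega
    · intro p hp
      push_cast
      ring
  rw [key, Finset.sum_product]
  have h1 : n - k + 1 - 1 = n - k := by omega
  refine Eq.trans (Finset.sum_congr rfl fun x _ => (rfl : _ = Uk k)) ?_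
  rw [Finset.sum_const, Nat.card_Icc, h1, nsmul_eq_mul]

lemma range_succ_insert (n : ℕ) : Finset.range (n+1) = insert 0 (Finset.Icc 1 n) := by
  ext x; simp [Finset.mem_Icc, Finset.mem_range]; omega

lemma H2_partial (n : ℕ) : H2 n = ∑ i ∈ Finset.range (n+1), 1 / (i : ℝ) ^ 2 := by
  rw [H2, range_succ_insert, Finset.sum_insert (by simp)]
  norm_num

lemma Hs_partial (n : ℕ) : Hs n = ∑ i ∈ Finset.range (n+1), 1 / (i : ℝ) := by
  rw [Hs, range_succ_insert, Finset.sum_insert (by simp)]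
  norm_num

lemma H2_tendsto : Tendsto H2 atTop (nhds (π ^ 2 / 6)) := by
  have h := hasSum_zeta_two.tendsto_sum_nat
  have h2 := h.comp (tendsto_add_atTop_nat 1)
  exact h2.congr fun n => (H2_partial n).symm

lemma H2_le (n : ℕ) : H2 n ≤ π ^ 2 / 6 := by
  rw [H2_partial, ← hasSum_zeta_two.tsum_eq]
  exact Summable.sum_le_tsum _ (fun i _ => by positivity) hasSum_zeta_two.summable

lemma H2_nonneg (n : ℕ) : 0 ≤ H2 n := by
  rw [H2]; positivity

lemma H2_lb (k : ℕ) (hk : 1 ≤ k) : π ^ 2 / 6 ≤ H2 k + 1 / k := by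
  have key : ∀ N, k ≤ N → H2 N ≤ H2 k + (1 / (k : ℝ) - 1 / (N : ℝ)) := by
    intro N hN
    induction N, hN using Nat.le_induction with
    | base => simp
    | succ N hN ih =>
      have hN0 : (0:ℝ) < N := by exact_mod_cast lt_of_lt_of_le hk hN
      have hstep : H2 (N+1) = H2 N + 1 / ((N:ℝ)+1) ^ 2 := by
        rw [H2, H2, Icc_succ_insert, Finset.sum_insert (by simp)]; push_cast; ring
      have hineq : 1 / ((N:ℝ)+1) ^ 2 ≤ 1 / (N:ℝ) - 1 / ((N:ℝ)+1) := by
        have e1 : 1 / (N:ℝ) - 1 / ((N:ℝ)+1) = 1 / ((N:ℝ) * ((N:ℝ)+1)) := by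
          field_simp
          ring
        rw [e1]
        apply one_div_le_one_div_of_le
        · positivity
        · nlinarith
      push_cast
      push_cast at ih
      linarith
  refine le_of_tendsto H2_tendsto ?_
  filter_upwards [Filter.eventually_ge_atTop k] with N hN
  have h1 := key N hN
  have h2 : (0:ℝ) ≤ 1 / (N:ℝ) := by positivity
  linarith

lemma Hs_div_tendsto : Tendsto (fun n : ℕ => Hs n / n) atTop (nhds 0) := by
  have h0 : Tendsto (fun i : ℕ => 1 / (i : ℝ)) atTop (nhds 0) :=
    tendsto_one_div_atTop_nhds_zero_nat
  have h1 := h0.cesaro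
  have h2 : Tendsto (fun n : ℕ => ((n:ℝ))⁻¹ * (1 / (n:ℝ))) atTop (nhds 0) := by
    have := (tendsto_inv_atTop_nhds_zero_nat (𝕜 := ℝ)).mul tendsto_one_div_atTop_nhds_zero_nat
    simpa using this
  have h3 := h1.add h2
  rw [add_zero] at h3
  refine h3.congr fun n => ?_
  rw [Hs_partial, Finset.sum_range_succ]
  rw [div_eq_inv_mul]
  ring

lemma sum_coef (n : ℕ) : ∑ k ∈ Finset.range n, ((n - k : ℕ) : ℝ) = n * (n + 1) / 2 := by
  induction n with
  | zero => simp
  | succ n ih =>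
    rw [Finset.sum_range_succ]
    have h : ∀ k ∈ Finset.range n, ((n + 1 - k : ℕ) : ℝ) = ((n - k : ℕ) : ℝ) + 1 := by
      intro k hk
      simp only [Finset.mem_range] at hk
      have : n + 1 - k = (n - k) + 1 := by omega
      rw [this]; push_cast; ring
    rw [Finset.sum_congr rfl h, Finset.sum_add_distrib, ih, Finset.sum_const,
      Finset.card_range, nsmul_eq_mul]
    have : n + 1 - n = 1 := by omega
    rw [this]
    push_cast
    ring

lemma F_upper (n : ℕ) :
    ∑ k ∈ Finset.range n, ((n - k : ℕ) : ℝ) * H2 k ≤ (π ^ 2 / 6) * (n * (n + 1) / 2) := by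
  calc ∑ k ∈ Finset.range n, ((n - k : ℕ) : ℝ) * H2 k
      ≤ ∑ k ∈ Finset.range n, ((n - k : ℕ) : ℝ) * (π ^ 2 / 6) :=
        Finset.sum_le_sum fun k _ => mul_le_mul_of_nonneg_left (H2_le k) (Nat.cast_nonneg _)
    _ = (π ^ 2 / 6) * (n * (n + 1) / 2) := by rw [← Finset.sum_mul, sum_coef]; ring

lemma F_lower (n : ℕ) (hn : 1 ≤ n) :
    (π ^ 2 / 6) * (n * (n + 1) / 2) - (π ^ 2 / 6) * n - n * Hs n
      ≤ ∑ k ∈ Finset.range n, ((n - k : ℕ) : ℝ) * H2 k := by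
  have hsplit : Finset.range n = insert 0 (Finset.Icc 1 (n - 1)) := by
    ext x; simp [Finset.mem_Icc, Finset.mem_range]; omega
  have hIccsum : ∑ k ∈ Finset.Icc 1 (n - 1), ((n - k : ℕ) : ℝ) = n * (n + 1) / 2 - n := by
    have h := sum_coef n
    rw [hsplit, Finset.sum_insert (by simp)] at h
    simp only [Nat.sub_zero] at h
    linarith
  rw [hsplit, Finset.sum_insert (by simp)]
  have hH20 : H2 0 = 0 := by simp [H2]
  rw [hH20, mul_zero, zero_add]
  have hterm : ∀ k ∈ Finset.Icc 1 (n - 1),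
      ((n - k : ℕ) : ℝ) * (π ^ 2 / 6) - (n : ℝ) * (1 / k) ≤ ((n - k : ℕ) : ℝ) * H2 k := by
    intro k hk
    simp only [Finset.mem_Icc] at hk
    have hk0 : (0:ℝ) < k := by exact_mod_cast hk.1
    have h1 : π ^ 2 / 6 - 1 / k ≤ H2 k := by linarith [H2_lb k hk.1]
    have hc : (0:ℝ) ≤ ((n - k : ℕ) : ℝ) := Nat.cast_nonneg _
    have hcn : ((n - k : ℕ) : ℝ) ≤ n := by exact_mod_cast Nat.sub_le n k
    nlinarith [mul_nonneg hc (by linarith : (0:ℝ) ≤ H2 k - (π ^ 2 / 6 - 1 / k)),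
      mul_nonneg (by linarith : (0:ℝ) ≤ (n:ℝ) - ((n - k : ℕ) : ℝ))
        (one_div_nonneg.mpr hk0.le)]
  have hHs : Hs (n - 1) ≤ Hs n := by
    apply Finset.sum_le_sum_of_subset_of_nonneg
      (Finset.Icc_subset_Icc_right (by omega))
    intro i _ _; positivity
  have e2 : ∑ k ∈ Finset.Icc 1 (n - 1), (((n - k : ℕ) : ℝ) * (π ^ 2 / 6) - (n:ℝ) * (1 / k))
      = (n * (n + 1) / 2 - n) * (π ^ 2 / 6) - n * Hs (n - 1) := by
    rw [Finset.sum_sub_distrib, ← Finset.sum_mul, hIccsum, ← Finset.mul_sum, Hs]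
  have h3 := Finset.sum_le_sum hterm
  rw [e2] at h3
  have hn0 : (0:ℝ) ≤ n := Nat.cast_nonneg n
  nlinarith [mul_le_mul_of_nonneg_left hHs hn0]

/-- As `n → ∞`, the sum `∑ 1/((r+ℓ)(ℓ+s))` over integers `k₁ ≥ 1`, `r ≥ 0`, `ℓ ≥ 1`,
`s ≥ 0` with `k₁ + r + ℓ + s ≤ n` is asymptotically equivalent to `(π²/12)·n²`. -/
theorem sum_inv_rl_ls_quadruple_asymptotic :
    Tendsto (fun n : ℕ =>
      (∑ p ∈ (Finset.Icc 1 n ×ˢ Finset.range (n + 1) ×ˢ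
          Finset.Icc 1 n ×ˢ Finset.range (n + 1)).filter
          (fun p : ℕ × ℕ × ℕ × ℕ => p.1 + p.2.1 + p.2.2.1 + p.2.2.2 ≤ n),
        1 / (((p.2.1 : ℝ) + p.2.2.1) * ((p.2.2.1 : ℝ) + p.2.2.2)))
        / ((Real.pi ^ 2 / 12) * (n : ℝ) ^ 2))
      atTop (nhds 1) := by
  have hπ : π ≠ 0 := Real.pi_ne_zero
  have hSF : ∀ n : ℕ,
      (∑ p ∈ (Finset.Icc 1 n ×ˢ Finset.range (n + 1) ×ˢ
          Finset.Icc 1 n ×ˢ Finset.range (n + 1)).filter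
          (fun p : ℕ × ℕ × ℕ × ℕ => p.1 + p.2.1 + p.2.2.1 + p.2.2.2 ≤ n),
        1 / (((p.2.1 : ℝ) + p.2.2.1) * ((p.2.2.1 : ℝ) + p.2.2.2)))
      = ∑ k ∈ Finset.range n, ((n - k : ℕ) : ℝ) * H2 k := by
    intro n
    rw [S_eq]
    exact Finset.sum_congr rfl fun k _ => by rw [Uk_eq_H2]
  have h1n : Tendsto (fun n : ℕ => 1 / (n:ℝ)) atTop (nhds 0) :=
    tendsto_one_div_atTop_nhds_zero_nat
  apply tendsto_of_tendsto_of_tendsto_of_le_of_le'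
    (g := fun n : ℕ => 1 - 1 / (n:ℝ) - (12 / π ^ 2) * (Hs n / n))
    (h := fun n : ℕ => 1 + 1 / (n:ℝ))
  · have h := ((tendsto_const_nhds (x := (1:ℝ)) (f := atTop)).sub h1n).sub
      (Hs_div_tendsto.const_mul (12 / π ^ 2))
    simpa using h
  · have h := (tendsto_const_nhds (x := (1:ℝ)) (f := atTop)).add h1n
    simpa using h
  · filter_upwards [eventually_ge_atTop 1] with n hn
    have hn0 : (0:ℝ) < n := by exact_mod_cast hn
    rw [hSF n, le_div_iff₀ (by positivity)]
    have hF := F_lower n hn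
    have e : (1 - 1 / (n:ℝ) - (12 / π ^ 2) * (Hs n / n)) * (π ^ 2 / 12 * (n:ℝ) ^ 2)
        = (π ^ 2 / 6) * (n * (n + 1) / 2) - (π ^ 2 / 6) * n - n * Hs n := by
      field_simp
      ring
    rw [e]
    exact hF
  · filter_upwards [eventually_ge_atTop 1] with n hn
    have hn0 : (0:ℝ) < n := by exact_mod_cast hn
    rw [hSF n, div_le_iff₀ (by positivity)]
    have hF := F_upper n
    have e : (1 + 1 / (n:ℝ)) * (π ^ 2 / 12 * (n:ℝ) ^ 2)
        = (π ^ 2 / 6) * (n * (n + 1) / 2) := by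
      field_simp
      ring
    rw [e]
    exact hF
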